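/- Let a locally compact abelian group G act via α on a Hausdorff uniform space (X, 𝒰), with 𝒰 G-invariant. Then for x ∈ X: (a) if x is Bochner-type almost periodic (the orbit closure H_x is compact), then x is pseudo Bochner-type almost periodic (for every U ∈ 𝒰 the set P_U(x) is finitely relatively dense); (b) if (X, 𝒰) is complete and x is pseudo Bochner-type almost periodic, then x is Bochner-type almost periodic. -/

import Mathlib

open Uniformity Pointwise

/-- Let a locally compact abelian group `G` act via `α` on a Hausdorff uniform
space `(X, 𝒰)` with `𝒰` `G`-invariant. Then:
(a) Bochner-type almost periodicity (compact orbit closure) implies pseudo Bochner-type almost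
    periodicity (the sets of almost periods are finitely relatively dense);
(b) if `(X, 𝒰)` is complete, pseudo Bochner-type almost periodicity implies Bochner-type
    almost periodicity. -/
theorem stmt4 {G X : Type*}
    [AddCommGroup G] [TopologicalSpace G] [IsTopologicalAddGroup G]
    [LocallyCompactSpace G] [T2Space G]
    [UniformSpace X] [T2Space X]
    (α : G → X → X)
    (hzero : ∀ x, α 0 x = x)
    (hadd : ∀ s t x, α s (α t x) = α (s + t) x)
    (hinv : ∀ U ∈ 𝓤 X, ∃ U' ∈ 𝓤 X, ∀ (t : G), ∀ p : X × X, p ∈ U' →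
      (α t p.1, α t p.2) ∈ U)
    (x : X) :
    (IsCompact (closure (Set.range fun t : G => α t x)) →
      ∀ U ∈ 𝓤 X, ∃ F : Set G, F.Finite ∧ {t : G | (α t x, x) ∈ U} + F = Set.univ)
    ∧
    (CompleteSpace X →
      (∀ U ∈ 𝓤 X, ∃ F : Set G, F.Finite ∧ {t : G | (α t x, x) ∈ U} + F = Set.univ) →
      IsCompact (closure (Set.range fun t : G => α t x))) := by
  constructor
  · -- (a)
    intro hc U hU
    obtain ⟨U', hU', hshift⟩ := hinv U hU
    have htb : TotallyBounded (Set.range fun t : G => α t x) :=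
      hc.totallyBounded.subset subset_closure
    obtain ⟨s, hss, hsfin, hcov⟩ := totallyBounded_iff_subset.mp htb U' hU'
    haveI : Finite ↥s := hsfin.to_subtype
    choose g hg using fun y : s => (hss y.2 : ∃ t, α t x = (y : X))
    refine ⟨Set.range g, Set.finite_range g, ?_⟩
    ext t
    simp only [Set.mem_univ, iff_true]
    have hmem : α t x ∈ ⋃ y ∈ s, {z | (z, y) ∈ U'} := hcov ⟨t, rfl⟩
    obtain ⟨y, hy, hyU⟩ := Set.mem_iUnion₂.mp hmem
    have hg' : α (g ⟨y, hy⟩) x = y := hg ⟨y, hy⟩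
    have hv : (α t x, α (g ⟨y, hy⟩) x) ∈ U' := by rwa [hg']
    have := hshift (-(g ⟨y, hy⟩)) _ hv
    simp only [hadd] at this
    rw [neg_add_eq_sub, neg_add_cancel, hzero] at this
    exact Set.mem_add.mpr ⟨t - g ⟨y, hy⟩, this, g ⟨y, hy⟩, ⟨⟨y, hy⟩, rfl⟩,
      sub_add_cancel t _⟩
  · -- (b)
    intro hcomp hp
    haveI := hcomp
    have htb : TotallyBounded (Set.range fun t : G => α t x) := by
      intro U hU
      obtain ⟨U', hU', hshift⟩ := hinv U hU
      obtain ⟨F, hFfin, hFcov⟩ := hp U' hU'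
      refine ⟨(fun f => α f x) '' F, hFfin.image _, ?_⟩
      rintro _ ⟨t, rfl⟩
      have ht : t ∈ {t : G | (α t x, x) ∈ U'} + F := hFcov ▸ Set.mem_univ t
      obtain ⟨s, hs, f, hf, rfl⟩ := Set.mem_add.mp ht
      refine Set.mem_iUnion₂.mpr ⟨α f x, ⟨f, hf, rfl⟩, ?_⟩
      have := hshift f (α s x, x) hs
      simpa [hadd, add_comm] using this
    exact TotallyBounded.isCompact_of_isClosed htb.closure isClosed_closure
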